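/- Every equivalence class of wildly relatable tamed collapsing map pairs $(\mu, \text{sgn})$ contains a unique reference pair, i.e. a tamed pair in which, in every left branch of the associated tree, all $+$-signed nodes come before all $-$-signed nodes. Moreover, for every pair $(\mu,\text{sgn})$ in the class there is a unique allowable permutation $\rho$ with $(\mu,\text{sgn}) = W(\rho)(\hat\mu,\hat{\text{sgn}})$, where $(\hat\mu,\hat{\text{sgn}})$ is the reference pair. -/

import Mathlib

/-- A collapsing map: `μ(2) = 1` and `1 ≤ μ(2j) < 2j` for all `1 ≤ j ≤ k`. -/
def IsCollapsing (k : ℕ) (μ : ℕ → ℕ) : Prop :=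
  μ 2 = 1 ∧ ∀ j, 1 ≤ j → j ≤ k → 1 ≤ μ (2*j) ∧ μ (2*j) < 2*j

/-- `l` is an index of the domain `{2,4,…,2k}` (node `2l`). -/
def InDom (k l : ℕ) : Prop := 1 ≤ l ∧ l ≤ k

/-- The extension of a collapsing map to odd arguments: `μ(2l+1) := μ(2l)`. -/
def extMap (μ : ℕ → ℕ) : ℕ → ℕ :=
  fun n => if n % 2 = 0 then μ n else μ (n - 1)

/-- The extension of a sign function (`true` = `+`) to odd arguments:
`sgn(2l+1) := sgn(2l)`. -/
def extSgn (sgn : ℕ → Bool) : ℕ → Bool :=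
  fun n => if n % 2 = 0 then sgn n else sgn (n - 1)

/-- The tier value `t(n)`: the least `q` with `μ^q(n) = 1` (extended map). -/
noncomputable def tier (μ : ℕ → ℕ) (n : ℕ) : ℕ :=
  sInf {q | (extMap μ)^[q] n = 1}

/-- A signed collapsing pair `(μ, sgn)` is tamed: the four tier-ordering
conditions of Definition 4.14. -/
def Tamed (k : ℕ) (μ : ℕ → ℕ) (sgn : ℕ → Bool) : Prop :=
  (∀ l r, InDom k l → InDom k r →
      tier μ (2*l) < tier μ (2*r) → 2*l < 2*r) ∧
  (∀ l r, InDom k l → InDom k r → tier μ (2*l) = tier μ (2*r) →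
      extMap μ (extMap μ (2*l)) = extMap μ (extMap μ (2*r)) →
      extSgn sgn (μ (2*l)) = extSgn sgn (μ (2*r)) →
      μ (2*l) < μ (2*r) → 2*l < 2*r) ∧
  (∀ l r, InDom k l → InDom k r → tier μ (2*l) = tier μ (2*r) →
      extMap μ (extMap μ (2*l)) = extMap μ (extMap μ (2*r)) →
      extSgn sgn (μ (2*l)) = true → extSgn sgn (μ (2*r)) = false → 2*l < 2*r) ∧
  (∀ l r, InDom k l → InDom k r → tier μ (2*l) = tier μ (2*r) →
      extMap μ (extMap μ (2*l)) ≠ extMap μ (extMap μ (2*r)) →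
      μ (2*l) < μ (2*r) → 2*l < 2*r)

/-- A permutation of `ℕ` arising as the extension of a permutation of
`{2,4,…,2k}` by `ρ(2l+1) = ρ(2l)+1`, fixing everything else. -/
def ExtPerm (k : ℕ) (ρ : Equiv.Perm ℕ) : Prop :=
  (∀ n, (∀ l, InDom k l → n ≠ 2*l ∧ n ≠ 2*l + 1) → ρ n = n) ∧
  (∀ l, InDom k l → (∃ m, InDom k m ∧ ρ (2*l) = 2*m) ∧ ρ (2*l + 1) = ρ (2*l) + 1)

/-- `ρ` is allowable with respect to `(μ, sgn)`: it preserves each fiber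
`G_i = {2j : μ(2j) = i}` and is order-preserving on same-sign elements of each
fiber. -/
def Allowable (k : ℕ) (μ : ℕ → ℕ) (sgn : ℕ → Bool) (ρ : Equiv.Perm ℕ) : Prop :=
  ExtPerm k ρ ∧
  (∀ l, InDom k l → μ (ρ (2*l)) = μ (2*l)) ∧
  (∀ l r, InDom k l → InDom k r → l < r → μ (2*l) = μ (2*r) →
    sgn (2*l) = sgn (2*r) → ρ (2*l) < ρ (2*r))

/-- `(μ', sgn') = W(ρ)(μ, sgn)`: the wild move, `μ' = ρ ∘ μ`, `sgn' = sgn ∘ ρ⁻¹`. -/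
def WildMoveEq (k : ℕ) (ρ : Equiv.Perm ℕ) (μ : ℕ → ℕ) (sgn : ℕ → Bool)
    (μ' : ℕ → ℕ) (sgn' : ℕ → Bool) : Prop :=
  (∀ l, InDom k l → μ' (2*l) = ρ (μ (2*l))) ∧
  (∀ l, InDom k l → sgn' (ρ (2*l)) = sgn (2*l))

/-- `(μ, sgn)` and `(μ', sgn')` are wildly relatable. -/
def WildRel (k : ℕ) (μ : ℕ → ℕ) (sgn : ℕ → Bool)
    (μ' : ℕ → ℕ) (sgn' : ℕ → Bool) : Prop :=
  ∃ ρ, Allowable k μ sgn ρ ∧ WildMoveEq k ρ μ sgn μ' sgn'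

/-- A reference pair: a tamed pair in which, in every left branch (= fiber of `μ`),
all `+` nodes come before all `−` nodes. -/
def IsReference (k : ℕ) (μ : ℕ → ℕ) (sgn : ℕ → Bool) : Prop :=
  Tamed k μ sgn ∧
  ∀ l r, InDom k l → InDom k r → l < r → μ (2*l) = μ (2*r) →
    sgn (2*r) = true → sgn (2*l) = true


namespace S11

variable (k : ℕ) (μ : ℕ → ℕ) (sgn : ℕ → Bool)

/-- fiber of `l` in half-index form -/
def fib (l : ℕ) : Finset ℕ := (Finset.Icc 1 k).filter (fun m => μ (2*m) = μ (2*l))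

def Lst (l : ℕ) : List ℕ := (fib k μ l).sort (· ≤ ·)

def Pl (l : ℕ) : List ℕ := (Lst k μ l).filter (fun x => sgn (2*x))

def Nl (l : ℕ) : List ℕ := (Lst k μ l).filter (fun x => !sgn (2*x))

def PN (l : ℕ) : List ℕ := Pl k μ sgn l ++ Nl k μ sgn l

/-- the sorting map on half indices -/
def target (m : ℕ) : ℕ := (PN k μ sgn m).getD ((Lst k μ m).idxOf m) 0

lemma pn_perm (l : ℕ) : List.Perm (PN k μ sgn l) (Lst k μ l) := List.filter_append_perm _ _

lemma lst_nodup (l : ℕ) : (Lst k μ l).Nodup := (fib k μ l).sort_nodup _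

lemma pn_nodup (l : ℕ) : (PN k μ sgn l).Nodup :=
  ((pn_perm k μ sgn l).nodup_iff).2 (lst_nodup k μ l)

lemma pn_length (l : ℕ) : (PN k μ sgn l).length = (Lst k μ l).length :=
  (pn_perm k μ sgn l).length_eq

lemma mem_fib_iff {l m : ℕ} : m ∈ fib k μ l ↔ (1 ≤ m ∧ m ≤ k) ∧ μ (2*m) = μ (2*l) := by
  simp [fib, Finset.mem_filter, Finset.mem_Icc, and_assoc]

lemma mem_lst_iff {l m : ℕ} : m ∈ Lst k μ l ↔ m ∈ fib k μ l := Finset.mem_sort _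

lemma self_mem_lst {l : ℕ} (hl : InDom k l) : l ∈ Lst k μ l := by
  rw [mem_lst_iff, mem_fib_iff]; exact ⟨⟨hl.1, hl.2⟩, rfl⟩

lemma idx_lt {l : ℕ} (hl : InDom k l) :
    (Lst k μ l).idxOf l < (PN k μ sgn l).length := by
  rw [pn_length]; exact List.idxOf_lt_length_iff.2 (self_mem_lst k μ hl)

lemma target_eq {l : ℕ} (hl : InDom k l) :
    target k μ sgn l = (PN k μ sgn l)[(Lst k μ l).idxOf l]'(idx_lt k μ sgn hl) :=
  List.getD_eq_getElem _ _ _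

lemma target_mem_fib {l : ℕ} (hl : InDom k l) : target k μ sgn l ∈ fib k μ l := by
  rw [target_eq k μ sgn hl, ← mem_lst_iff, ← (pn_perm k μ sgn l).mem_iff]
  exact List.getElem_mem _

/-- fibers of same-fiber elements coincide -/
lemma fib_congr {l r : ℕ} (h : μ (2*l) = μ (2*r)) : fib k μ l = fib k μ r := by
  unfold fib; apply Finset.filter_congr; intro x _; simp [h]

lemma target_indom {l : ℕ} (hl : InDom k l) : InDom k (target k μ sgn l) := by
  have := (mem_fib_iff k μ).1 (target_mem_fib k μ sgn hl)
  exact ⟨this.1.1, this.1.2⟩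

lemma mu_target {l : ℕ} (hl : InDom k l) : μ (2 * target k μ sgn l) = μ (2*l) :=
  ((mem_fib_iff k μ).1 (target_mem_fib k μ sgn hl)).2


lemma lst_sorted (l : ℕ) : (Lst k μ l).Pairwise (· < ·) := (Finset.sortedLT_sort _).pairwise

lemma pl_sorted (l : ℕ) : (Pl k μ sgn l).Pairwise (· < ·) :=
  (lst_sorted k μ l).filter _

lemma nl_sorted (l : ℕ) : (Nl k μ sgn l).Pairwise (· < ·) :=
  (lst_sorted k μ l).filter _

lemma sorted_getElem_lt {L : List ℕ} (h : L.Pairwise (· < ·)) {i j : ℕ}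
    (hi : i < L.length) (hj : j < L.length) (hij : i < j) : L[i] < L[j] :=
  h.rel_get_of_lt (show (⟨i, hi⟩ : Fin L.length) < ⟨j, hj⟩ from hij)

lemma pn_getElem_lo {l i : ℕ} (hi : i < (Pl k μ sgn l).length)
    (h : i < (PN k μ sgn l).length) :
    (PN k μ sgn l)[i] = (Pl k μ sgn l)[i]'hi := by
  unfold PN; exact List.getElem_append_left hi

lemma pn_getElem_hi {l i : ℕ} (hge : (Pl k μ sgn l).length ≤ i)
    (h : i < (PN k μ sgn l).length) :
    (PN k μ sgn l)[i] = (Nl k μ sgn l)[i - (Pl k μ sgn l).length]'(by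
      unfold PN at h; rw [List.length_append] at h; omega) := by
  unfold PN; exact List.getElem_append_right hge

lemma sgn_pn_getElem {l i : ℕ} (h : i < (PN k μ sgn l).length) :
    sgn (2 * (PN k μ sgn l)[i]) = decide (i < (Pl k μ sgn l).length) := by
  by_cases hi : i < (Pl k μ sgn l).length
  · rw [pn_getElem_lo k μ sgn hi h]
    have hm : (Pl k μ sgn l)[i]'hi ∈ Pl k μ sgn l := List.getElem_mem _
    have := List.of_mem_filter hm
    simp_all
  · push_neg at hi
    have hb : i - (Pl k μ sgn l).length < (Nl k μ sgn l).length := by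
      unfold PN at h; rw [List.length_append] at h; omega
    rw [pn_getElem_hi k μ sgn hi h]
    have hm : (Nl k μ sgn l)[i - (Pl k μ sgn l).length]'hb ∈ Nl k μ sgn l :=
      List.getElem_mem _
    have := List.of_mem_filter hm
    simp_all

/-- index of a member is monotone in the sorted list -/
lemma idx_mono {l a b : ℕ} (ha : a ∈ Lst k μ l) (hb : b ∈ Lst k μ l) (hab : a < b) :
    (Lst k μ l).idxOf a < (Lst k μ l).idxOf b := by
  have hia := List.idxOf_lt_length_iff.2 ha
  have hib := List.idxOf_lt_length_iff.2 hb
  rcases lt_trichotomy ((Lst k μ l).idxOf a) ((Lst k μ l).idxOf b) with h | h | h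
  · exact h
  · exfalso
    have := (List.idxOf_inj ha).1 h
    omega
  · exfalso
    have := sorted_getElem_lt (lst_sorted k μ l) hib hia h
    rw [List.getElem_idxOf hia, List.getElem_idxOf hib] at this
    omega

/-- same fiber ⇒ same lists -/
lemma lst_congr {l r : ℕ} (h : μ (2*l) = μ (2*r)) : Lst k μ l = Lst k μ r := by
  unfold Lst; rw [fib_congr k μ h]

lemma target_r_eq {l r : ℕ} (hr : InDom k r) (hf : μ (2*l) = μ (2*r)) :
    target k μ sgn r = (PN k μ sgn l)[(Lst k μ l).idxOf r]'(by
      rw [pn_length]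
      exact List.idxOf_lt_length_iff.2 (by rw [lst_congr k μ hf]; exact self_mem_lst k μ hr)) := by
  rw [target_eq k μ sgn hr]
  simp only [lst_congr k μ hf.symm, PN, Pl, Nl]

lemma sgn_target_r {l r : ℕ} (hr : InDom k r) (hf : μ (2*l) = μ (2*r)) :
    sgn (2 * target k μ sgn r) = decide ((Lst k μ l).idxOf r < (Pl k μ sgn l).length) := by
  rw [target_r_eq k μ sgn hr hf]
  exact sgn_pn_getElem k μ sgn _

lemma sgn_target {l : ℕ} (hl : InDom k l) :
    sgn (2 * target k μ sgn l) = decide ((Lst k μ l).idxOf l < (Pl k μ sgn l).length) :=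
  sgn_target_r k μ sgn hl rfl

/-- P3 : sortedness of signs along a fiber -/
lemma target_sign_sorted {l r : ℕ} (hl : InDom k l) (hr : InDom k r) (hlr : l < r)
    (hf : μ (2*l) = μ (2*r)) (hs : sgn (2 * target k μ sgn r) = true) :
    sgn (2 * target k μ sgn l) = true := by
  rw [sgn_target_r k μ sgn hr hf] at hs
  rw [sgn_target k μ sgn hl]
  have hml : l ∈ Lst k μ l := self_mem_lst k μ hl
  have hmr : r ∈ Lst k μ l := by rw [lst_congr k μ hf]; exact self_mem_lst k μ hr
  have := idx_mono k μ (l := l) hml hmr hlr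
  simp only [decide_eq_true_eq] at hs ⊢
  omega

/-- P4 : strict monotonicity on equal target-sign elements of a fiber -/
lemma target_mono {l r : ℕ} (hl : InDom k l) (hr : InDom k r) (hlr : l < r)
    (hf : μ (2*l) = μ (2*r)) (hs : sgn (2 * target k μ sgn l) = sgn (2 * target k μ sgn r)) :
    target k μ sgn l < target k μ sgn r := by
  have hml : l ∈ Lst k μ l := self_mem_lst k μ hl
  have hmr : r ∈ Lst k μ l := by rw [lst_congr k μ hf]; exact self_mem_lst k μ hr
  have hidx := idx_mono k μ (l := l) hml hmr hlr
  have hilen : (Lst k μ l).idxOf l < (PN k μ sgn l).length := by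
    rw [pn_length]; exact List.idxOf_lt_length_iff.2 hml
  have hjlen : (Lst k μ l).idxOf r < (PN k μ sgn l).length := by
    rw [pn_length]; exact List.idxOf_lt_length_iff.2 hmr
  have hsl := sgn_target k μ sgn hl
  have hsr := sgn_target_r k μ sgn hr hf
  rw [target_eq k μ sgn hl, target_r_eq k μ sgn hr hf]
  set i := (Lst k μ l).idxOf l
  set j := (Lst k μ l).idxOf r
  set p := (Pl k μ sgn l).length with hp
  by_cases hc : j < p
  · have hc' : i < p := lt_trans hidx hc
    rw [pn_getElem_lo k μ sgn hc' hilen, pn_getElem_lo k μ sgn hc hjlen]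
    exact sorted_getElem_lt (pl_sorted k μ sgn l) hc' hc hidx
  · push_neg at hc
    have hc' : p ≤ i := by
      by_contra hcc
      push_neg at hcc
      rw [hsl, hsr] at hs
      rw [decide_eq_decide] at hs
      omega
    rw [pn_getElem_hi k μ sgn hc' hilen, pn_getElem_hi k μ sgn hc hjlen]
    apply sorted_getElem_lt (nl_sorted k μ sgn l)
    omega

def domS : Set ℕ := {m | 1 ≤ m ∧ m ≤ k}

lemma target_injOn : Set.InjOn (target k μ sgn) (domS k) := by
  intro a ha b hb hab
  have hA : InDom k a := ⟨ha.1, ha.2⟩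
  have hB : InDom k b := ⟨hb.1, hb.2⟩
  have hfib : μ (2*a) = μ (2*b) := by
    rw [← mu_target k μ sgn hA, ← mu_target k μ sgn hB, hab]
  have hma : a ∈ Lst k μ a := self_mem_lst k μ hA
  have hmb : b ∈ Lst k μ a := by rw [lst_congr k μ hfib]; exact self_mem_lst k μ hB
  have h1 := target_eq k μ sgn hA
  have h2 := target_r_eq k μ sgn (l := a) hB hfib
  rw [h1, h2] at hab
  have hia : (Lst k μ a).idxOf a < (PN k μ sgn a).length := by
    rw [pn_length]; exact List.idxOf_lt_length_iff.2 hma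
  have hib : (Lst k μ a).idxOf b < (PN k μ sgn a).length := by
    rw [pn_length]; exact List.idxOf_lt_length_iff.2 hmb
  have hidx : (Lst k μ a).idxOf a = (Lst k μ a).idxOf b := by
    have e1 := List.Nodup.idxOf_getElem (pn_nodup k μ sgn a) _ hia
    have e2 := List.Nodup.idxOf_getElem (pn_nodup k μ sgn a) _ hib
    rw [hab] at e1
    rw [e2] at e1
    exact e1.symm
  exact (List.idxOf_inj hma).1 hidx

lemma target_surj {m : ℕ} (hm : InDom k m) : ∃ a, (InDom k a) ∧ target k μ sgn a = m := by
  have := Finset.surj_on_of_inj_on_of_card_le (s := Finset.Icc 1 k) (t := Finset.Icc 1 k)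
    (fun a _ => target k μ sgn a)
    (fun a ha => by
      have hA : InDom k a := by simp [Finset.mem_Icc] at ha; exact ⟨ha.1, ha.2⟩
      have := target_indom k μ sgn hA
      simp [Finset.mem_Icc]; exact ⟨this.1, this.2⟩)
    (fun a b ha hb h => target_injOn k μ sgn
      (by simp [Finset.mem_Icc] at ha; exact ha) (by simp [Finset.mem_Icc] at hb; exact hb) h)
    le_rfl m (by simp [Finset.mem_Icc]; exact ⟨hm.1, hm.2⟩)
  obtain ⟨a, ha, h⟩ := this
  exact ⟨a, by simp [Finset.mem_Icc] at ha; exact ⟨ha.1, ha.2⟩, h.symm⟩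

noncomputable def invt (m : ℕ) : ℕ := Function.invFunOn (target k μ sgn) (domS k) m

lemma invt_spec {m : ℕ} (hm : InDom k m) :
    InDom k (invt k μ sgn m) ∧ target k μ sgn (invt k μ sgn m) = m := by
  obtain ⟨a, ha, h⟩ := target_surj k μ sgn hm
  have hex : ∃ a ∈ domS k, target k μ sgn a = m := ⟨a, ⟨ha.1, ha.2⟩, h⟩
  have h1 := Function.invFunOn_mem hex
  have h2 := Function.invFunOn_eq hex
  exact ⟨⟨h1.1, h1.2⟩, h2⟩

lemma invt_indom {m : ℕ} (hm : InDom k m) : InDom k (invt k μ sgn m) := (invt_spec k μ sgn hm).1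

lemma target_invt {m : ℕ} (hm : InDom k m) : target k μ sgn (invt k μ sgn m) = m :=
  (invt_spec k μ sgn hm).2

lemma invt_target {m : ℕ} (hm : InDom k m) : invt k μ sgn (target k μ sgn m) = m :=
  (target_injOn k μ sgn).leftInvOn_invFunOn ⟨hm.1, hm.2⟩

lemma mu_invt {m : ℕ} (hm : InDom k m) : μ (2 * invt k μ sgn m) = μ (2 * m) := by
  conv_rhs => rw [← target_invt k μ sgn hm]
  rw [mu_target k μ sgn (invt_indom k μ sgn hm)]

/-- the forward extended function -/
def ff (n : ℕ) : ℕ :=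
  if 1 ≤ n/2 ∧ n/2 ≤ k then
    (if n % 2 = 0 then 2 * target k μ sgn (n/2) else 2 * target k μ sgn (n/2) + 1)
  else n

/-- the inverse extended function -/
noncomputable def gg (n : ℕ) : ℕ :=
  if 1 ≤ n/2 ∧ n/2 ≤ k then
    (if n % 2 = 0 then 2 * invt k μ sgn (n/2) else 2 * invt k μ sgn (n/2) + 1)
  else n

lemma ff_even {m : ℕ} (hm : InDom k m) : ff k μ sgn (2*m) = 2 * target k μ sgn m := by
  unfold ff
  have h1 : (2*m)/2 = m := by omega
  have h2 : (2*m) % 2 = 0 := by omega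
  rw [h1, h2]
  simp [hm.1, hm.2]

lemma ff_odd {m : ℕ} (hm : InDom k m) : ff k μ sgn (2*m+1) = 2 * target k μ sgn m + 1 := by
  unfold ff
  have h1 : (2*m+1)/2 = m := by omega
  have h2 : (2*m+1) % 2 = 1 := by omega
  rw [h1, h2]
  simp [hm.1, hm.2]

lemma ff_fix {n : ℕ} (hn : ¬ (1 ≤ n/2 ∧ n/2 ≤ k)) : ff k μ sgn n = n := by
  unfold ff; simp [hn]

lemma gg_even {m : ℕ} (hm : InDom k m) : gg k μ sgn (2*m) = 2 * invt k μ sgn m := by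
  unfold gg
  have h1 : (2*m)/2 = m := by omega
  have h2 : (2*m) % 2 = 0 := by omega
  rw [h1, h2]
  simp [hm.1, hm.2]

lemma gg_odd {m : ℕ} (hm : InDom k m) : gg k μ sgn (2*m+1) = 2 * invt k μ sgn m + 1 := by
  unfold gg
  have h1 : (2*m+1)/2 = m := by omega
  have h2 : (2*m+1) % 2 = 1 := by omega
  rw [h1, h2]
  simp [hm.1, hm.2]

lemma gg_fix {n : ℕ} (hn : ¬ (1 ≤ n/2 ∧ n/2 ≤ k)) : gg k μ sgn n = n := by
  unfold gg; simp [hn]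

lemma gg_ff (n : ℕ) : gg k μ sgn (ff k μ sgn n) = n := by
  by_cases hn : 1 ≤ n/2 ∧ n/2 ≤ k
  · have hdm : InDom k (n/2) := ⟨hn.1, hn.2⟩
    have htd := target_indom k μ sgn hdm
    by_cases he : n % 2 = 0
    · have hn2 : n = 2 * (n/2) := by omega
      rw [hn2, ff_even k μ sgn hdm, gg_even k μ sgn htd, invt_target k μ sgn hdm]
    · have hn2 : n = 2 * (n/2) + 1 := by omega
      rw [hn2, ff_odd k μ sgn hdm, gg_odd k μ sgn htd, invt_target k μ sgn hdm]
  · rw [ff_fix k μ sgn hn, gg_fix k μ sgn hn]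

lemma ff_gg (n : ℕ) : ff k μ sgn (gg k μ sgn n) = n := by
  by_cases hn : 1 ≤ n/2 ∧ n/2 ≤ k
  · have hdm : InDom k (n/2) := ⟨hn.1, hn.2⟩
    have htd := invt_indom k μ sgn hdm
    by_cases he : n % 2 = 0
    · have hn2 : n = 2 * (n/2) := by omega
      rw [hn2, gg_even k μ sgn hdm, ff_even k μ sgn htd, target_invt k μ sgn hdm]
    · have hn2 : n = 2 * (n/2) + 1 := by omega
      rw [hn2, gg_odd k μ sgn hdm, ff_odd k μ sgn htd, target_invt k μ sgn hdm]
  · rw [gg_fix k μ sgn hn, ff_fix k μ sgn hn]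

noncomputable def rho : Equiv.Perm ℕ :=
  ⟨ff k μ sgn, gg k μ sgn, gg_ff k μ sgn, ff_gg k μ sgn⟩

lemma rho_apply (n : ℕ) : rho k μ sgn n = ff k μ sgn n := rfl
lemma rho_symm_apply (n : ℕ) : (rho k μ sgn).symm n = gg k μ sgn n := rfl

/-- the reference pair -/
noncomputable def muh : ℕ → ℕ := fun n => gg k μ sgn (μ n)
def sh : ℕ → Bool := fun n => sgn (ff k μ sgn n)

lemma extMap_even (μ' : ℕ → ℕ) (m : ℕ) : extMap μ' (2*m) = μ' (2*m) := by
  unfold extMap; simp [Nat.mul_mod_right]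

lemma extMap_odd (μ' : ℕ → ℕ) (m : ℕ) : extMap μ' (2*m+1) = μ' (2*m) := by
  unfold extMap
  have : (2*m+1) % 2 = 1 := by omega
  simp [this]

variable (hμ : IsCollapsing k μ) (ht : Tamed k μ sgn)

include hμ in
lemma extMap_lt {n : ℕ} (h1 : 2 ≤ n) (h2 : n ≤ 2*k+1) :
    1 ≤ extMap μ n ∧ extMap μ n < n := by
  by_cases he : n % 2 = 0
  · have hn : n = 2 * (n/2) := by omega
    have hd : 1 ≤ n/2 ∧ n/2 ≤ k := by omega
    have := hμ.2 (n/2) hd.1 hd.2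
    rw [hn, extMap_even]
    omega
  · have hn : n = 2 * (n/2) + 1 := by omega
    have hd : 1 ≤ n/2 ∧ n/2 ≤ k := by omega
    have := hμ.2 (n/2) hd.1 hd.2
    rw [hn, extMap_odd]
    omega

include hμ in
lemma tier_exists {n : ℕ} (h1 : 1 ≤ n) (h2 : n ≤ 2*k+1) :
    ∃ q, (extMap μ)^[q] n = 1 := by
  induction n using Nat.strong_induction_on with
  | _ n ih =>
    by_cases hone : n = 1
    · exact ⟨0, hone⟩
    · have h2n : 2 ≤ n := by omega
      obtain ⟨ha, hb⟩ := extMap_lt k μ hμ h2n h2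
      obtain ⟨q, hq⟩ := ih (extMap μ n) hb ha (by omega)
      exact ⟨q+1, by rw [Function.iterate_succ_apply]; exact hq⟩

include hμ in
lemma tier_succ {n : ℕ} (h1 : 2 ≤ n) (h2 : n ≤ 2*k+1) :
    tier μ n = tier μ (extMap μ n) + 1 := by
  obtain ⟨ha, hb⟩ := extMap_lt k μ hμ h1 h2
  have hne : {q | (extMap μ)^[q] (extMap μ n) = 1}.Nonempty :=
    tier_exists k μ hμ ha (by omega)
  have hmem : (extMap μ)^[sInf {q | (extMap μ)^[q] (extMap μ n) = 1}] (extMap μ n) = 1 :=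
    Nat.sInf_mem hne
  have hmem' : sInf {q | (extMap μ)^[q] (extMap μ n) = 1} + 1 ∈ {q | (extMap μ)^[q] n = 1} := by
    rw [Set.mem_setOf_eq, Function.iterate_succ_apply]
    exact hmem
  have key : ∀ b ∈ {q | (extMap μ)^[q] n = 1},
      sInf {q | (extMap μ)^[q] (extMap μ n) = 1} + 1 ≤ b := by
    intro x hx
    rw [Set.mem_setOf_eq] at hx
    rcases x with _ | y
    · simp only [Function.iterate_zero, id_eq] at hx
      omega
    · have hy : (extMap μ)^[y] (extMap μ n) = 1 := by
        rw [← Function.iterate_succ_apply]; exact hx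
      have := Nat.sInf_le (s := {q | (extMap μ)^[q] (extMap μ n) = 1}) hy
      omega
  have h3 : tier μ n = sInf {q | (extMap μ)^[q] (extMap μ n) = 1} + 1 :=
    le_antisymm (Nat.sInf_le hmem') (le_csInf ⟨_, hmem'⟩ key)
  rw [h3]
  rfl

include hμ in
lemma tier_child {j : ℕ} (hj : InDom k j) :
    tier μ (2*j) = tier μ (μ (2*j)) + 1 := by
  have := tier_succ k μ hμ (n := 2*j) (by have := hj.1; omega) (by have := hj.2; omega)
  rwa [extMap_even] at this

include hμ in
lemma tier_odd {t : ℕ} (ht1 : 1 ≤ t) (ht2 : t ≤ k) :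
    tier μ (2*t+1) = tier μ (2*t) := by
  have h1 := tier_succ k μ hμ (n := 2*t+1) (by omega) (by omega)
  have h2 := tier_succ k μ hμ (n := 2*t) (by omega) (by omega)
  rw [extMap_odd] at h1
  rw [extMap_even] at h2
  rw [h1, h2]

include hμ ht in
/-- fiber-mates of the parent of `2j` are below `2j` -/
lemma mate_lt {j m : ℕ} (hj : InDom k j) (hm : InDom k m) (hp : 2 ≤ μ (2*j))
    (hE : μ (2*m) = extMap μ (μ (2*j))) : 2*m < 2*j := by
  have hmu := hμ.2 j hj.1 hj.2
  have hjk := hj.2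
  have h1 : tier μ (μ (2*j)) = tier μ (extMap μ (μ (2*j))) + 1 :=
    tier_succ k μ hμ hp (by omega)
  have h2 : tier μ (2*m) = tier μ (μ (2*m)) + 1 := tier_child k μ hμ hm
  have h3 : tier μ (2*j) = tier μ (μ (2*j)) + 1 := tier_child k μ hμ hj
  rw [← hE] at h1
  apply ht.1 m j hm hj
  omega

include hμ ht in
/-- fibers are blocks of consecutive numbers -/
lemma fiber_block {a b c : ℕ} (ha : InDom k a) (hb : InDom k b) (hc : InDom k c)
    (hab : a < b) (hbc : b < c) (hac : μ (2*a) = μ (2*c)) : μ (2*b) = μ (2*a) := by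
  by_contra hne
  have hta : tier μ (2*a) = tier μ (μ (2*a)) + 1 := tier_child k μ hμ ha
  have htb : tier μ (2*b) = tier μ (μ (2*b)) + 1 := tier_child k μ hμ hb
  have htc : tier μ (2*c) = tier μ (μ (2*c)) + 1 := tier_child k μ hμ hc
  have htac : tier μ (2*a) = tier μ (2*c) := by rw [hta, htc, hac]
  -- tiers of b equal
  have htab : tier μ (2*b) = tier μ (2*a) := by
    rcases lt_trichotomy (tier μ (2*b)) (tier μ (2*a)) with h | h | h
    · have := ht.1 b a hb ha h
      omega
    · exact h
    · have := ht.1 c b hc hb (by omega)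
      omega
  by_cases hgp : extMap μ (extMap μ (2*b)) = extMap μ (extMap μ (2*a))
  · -- same grandparent
    have hgpc : extMap μ (extMap μ (2*c)) = extMap μ (extMap μ (2*a)) := by
      rw [extMap_even, extMap_even, hac]
    by_cases hsgn : extSgn sgn (μ (2*b)) = extSgn sgn (μ (2*a))
    · -- same parent sign : use condition 2 twice
      rcases lt_trichotomy (μ (2*b)) (μ (2*a)) with h | h | h
      · have := ht.2.1 b a hb ha (by omega) hgp hsgn h
        omega
      · exact hne h
      · have := ht.2.1 c b hc hb (by omega) (by rw [hgpc, hgp]) (by rw [← hac]; exact hsgn.symm) (by omega)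
        omega
    · rcases Bool.eq_false_or_eq_true (extSgn sgn (μ (2*b))) with hbt | hbf
      · -- b is +, a is −
        have haf : extSgn sgn (μ (2*a)) = false := by
          rcases Bool.eq_false_or_eq_true (extSgn sgn (μ (2*a))) with h | h
          · rw [hbt, h] at hsgn; simp at hsgn
          · exact h
        have := ht.2.2.1 b a hb ha (by omega) hgp hbt haf
        omega
      · -- b is −, a is +
        have hat : extSgn sgn (μ (2*a)) = true := by
          rcases Bool.eq_false_or_eq_true (extSgn sgn (μ (2*a))) with h | h
          · exact h
          · rw [hbf, h] at hsgn; simp at hsgn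
        have := ht.2.2.1 c b hc hb (by omega) (by rw [hgpc, hgp]) (by rw [← hac]; exact hat) hbf
        omega
  · -- different grandparents : use condition 4 twice
    rcases lt_trichotomy (μ (2*b)) (μ (2*a)) with h | h | h
    · have := ht.2.2.2 b a hb ha (by omega) hgp h
      omega
    · exact hne h
    · have hgp' : extMap μ (extMap μ (2*c)) ≠ extMap μ (extMap μ (2*b)) := by
        intro hcon
        apply hgp
        rw [← hcon]
        rw [extMap_even, extMap_even, hac]
      have := ht.2.2.2 c b hc hb (by omega) hgp' (by omega)
      omega

include hμ ht in
/-- separation of distinct fibers -/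
lemma fiber_sep {a b a' b' : ℕ} (ha : InDom k a) (hb : InDom k b) (ha' : InDom k a')
    (hb' : InDom k b') (hne : μ (2*a) ≠ μ (2*b)) (hab : a < b)
    (hfa : μ (2*a') = μ (2*a)) (hfb : μ (2*b') = μ (2*b)) : a' < b' := by
  by_contra hcon
  push_neg at hcon
  have hne' : b' ≠ a' := by
    intro h
    apply hne
    rw [← hfa, ← hfb, h]
  have hba : b' < a' := by omega
  rcases Nat.lt_or_ge a b' with h1 | h1
  · -- a < b' < a' : b' in fiber of a, contradiction
    have := fiber_block k μ sgn hμ ht ha hb' ha' h1 hba (hfa.symm)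
    rw [hfb] at this
    exact hne this.symm
  · rcases Nat.eq_or_lt_of_le h1 with h2 | h2
    · apply hne; rw [← hfb, h2]
    · -- b' < a < b : a between b' and b (same fiber b)
      have := fiber_block k μ sgn hμ ht hb' ha hb h2 hab hfb
      exact hne (by rw [this, hfb])
  

lemma extMap_eq_half (μ' : ℕ → ℕ) (n : ℕ) : extMap μ' n = μ' (2*(n/2)) := by
  unfold extMap
  by_cases h : n % 2 = 0
  · simp [h]; congr 1; omega
  · have h1 : n % 2 = 1 := by omega
    simp [h1]
    congr 1
    omega

lemma extSgn_eq_half (s : ℕ → Bool) (n : ℕ) : extSgn s n = s (2*(n/2)) := by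
  unfold extSgn
  by_cases h : n % 2 = 0
  · simp [h]; congr 1; omega
  · have h1 : n % 2 = 1 := by omega
    simp [h1]
    congr 1
    omega

lemma ff_extMap (n : ℕ) : extMap μ (ff k μ sgn n) = extMap μ n := by
  by_cases hn : 1 ≤ n/2 ∧ n/2 ≤ k
  · have hdm : InDom k (n/2) := ⟨hn.1, hn.2⟩
    by_cases he : n % 2 = 0
    · have hn2 : n = 2 * (n/2) := by omega
      rw [hn2, ff_even k μ sgn hdm, extMap_even, extMap_even, mu_target k μ sgn hdm]
    · have hn2 : n = 2 * (n/2) + 1 := by omega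
      rw [hn2, ff_odd k μ sgn hdm, extMap_odd, extMap_odd, mu_target k μ sgn hdm]
  · rw [ff_fix k μ sgn hn]

lemma gg_extMap (n : ℕ) : extMap μ (gg k μ sgn n) = extMap μ n := by
  conv_rhs => rw [← ff_gg k μ sgn n]
  rw [ff_extMap]

lemma extMap_muh (n : ℕ) : extMap (muh k μ sgn) n = gg k μ sgn (extMap μ n) := by
  unfold extMap muh
  by_cases h : n % 2 = 0 <;> simp [h]

lemma iterate_gg_extMap (q z : ℕ) :
    (extMap μ)^[q+1] (gg k μ sgn z) = (extMap μ)^[q+1] z := by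
  rw [Function.iterate_succ_apply, Function.iterate_succ_apply, gg_extMap]

lemma iterate_muh (q n : ℕ) :
    (extMap (muh k μ sgn))^[q+1] n = gg k μ sgn ((extMap μ)^[q+1] n) := by
  induction q generalizing n with
  | zero => simp [extMap_muh]
  | succ q ih =>
    rw [Function.iterate_succ_apply]
    rw [ih (extMap (muh k μ sgn) n), extMap_muh, iterate_gg_extMap]
    rw [← Function.iterate_succ_apply]

lemma ff_one : ff k μ sgn 1 = 1 := by
  rw [ff_fix]
  omega

lemma gg_one : gg k μ sgn 1 = 1 := by
  rw [gg_fix]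
  omega

lemma tier_muh (n : ℕ) : tier (muh k μ sgn) n = tier μ n := by
  unfold tier
  congr 1
  ext q
  rcases q with _ | q
  · simp
  · simp only [Set.mem_setOf_eq, iterate_muh]
    constructor
    · intro h
      have := congrArg (ff k μ sgn) h
      rwa [ff_gg, ff_one] at this
    · intro h
      rw [h, gg_one]

lemma sh_extSgn (n : ℕ) : extSgn (sh k μ sgn) n = extSgn sgn (ff k μ sgn n) := by
  rw [extSgn_eq_half, extSgn_eq_half]
  show sgn (ff k μ sgn (2 * (n / 2))) = sgn (2 * (ff k μ sgn n / 2))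
  by_cases hn : 1 ≤ n/2 ∧ n/2 ≤ k
  · have hdm : InDom k (n/2) := ⟨hn.1, hn.2⟩
    rw [ff_even k μ sgn hdm]
    by_cases he : n % 2 = 0
    · have hn2 : n = 2 * (n/2) := by omega
      conv_rhs => rw [hn2, ff_even k μ sgn hdm]
      congr 1
      omega
    · have hn2 : n = 2 * (n/2) + 1 := by omega
      conv_rhs => rw [hn2, ff_odd k μ sgn hdm]
      congr 1
      omega
  · have hd : ¬ (1 ≤ (2*(n/2))/2 ∧ (2*(n/2))/2 ≤ k) := by omega
    rw [ff_fix k μ sgn hn, ff_fix k μ sgn hd]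

lemma gg_extSgn (n : ℕ) : extSgn (sh k μ sgn) (gg k μ sgn n) = extSgn sgn n := by
  rw [sh_extSgn, ff_gg]

lemma ff_bounds {n : ℕ} (hn : 1 ≤ n/2 ∧ n/2 ≤ k) :
    2 ≤ ff k μ sgn n ∧ ff k μ sgn n ≤ 2*k+1 := by
  have hdm : InDom k (n/2) := ⟨hn.1, hn.2⟩
  have htd := target_indom k μ sgn hdm
  have h1 := htd.1
  have h2 := htd.2
  by_cases he : n % 2 = 0
  · have hn2 : n = 2 * (n/2) := by omega
    rw [hn2, ff_even k μ sgn hdm]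
    omega
  · have hn2 : n = 2 * (n/2) + 1 := by omega
    rw [hn2, ff_odd k μ sgn hdm]
    omega

include hμ ht in
lemma ford_same {a b : ℕ} (hab : a < b) (hE : extMap μ a = extMap μ b)
    (hs : extSgn (sh k μ sgn) a = extSgn (sh k μ sgn) b) :
    ff k μ sgn a < ff k μ sgn b := by
  by_cases hsa : 1 ≤ a/2 ∧ a/2 ≤ k
  · by_cases hsb : 1 ≤ b/2 ∧ b/2 ≤ k
    · -- both in domain range
      set m := a/2 with hm
      set m' := b/2 with hm'
      have hdm : InDom k m := ⟨hsa.1, hsa.2⟩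
      have hdm' : InDom k m' := ⟨hsb.1, hsb.2⟩
      have hfib : μ (2*m) = μ (2*m') := by
        have q1 := extMap_eq_half μ a
        have q2 := extMap_eq_half μ b
        rw [hm, hm']
        rw [← q1, ← q2, hE]
      have hsgn : sgn (2 * target k μ sgn m) = sgn (2 * target k μ sgn m') := by
        have h1 := sh_extSgn k μ sgn a
        have h2 := sh_extSgn k μ sgn b
        rw [hs] at h1
        rw [h1] at h2
        rw [extSgn_eq_half, extSgn_eq_half] at h2
        -- (ff a)/2 = target m etc.
        have e1 : 2 * (ff k μ sgn a / 2) = 2 * target k μ sgn m := by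
          by_cases he : a % 2 = 0
          · have : a = 2*m := by omega
            rw [this, ff_even k μ sgn hdm]
            omega
          · have : a = 2*m+1 := by omega
            rw [this, ff_odd k μ sgn hdm]
            omega
        have e2 : 2 * (ff k μ sgn b / 2) = 2 * target k μ sgn m' := by
          by_cases he : b % 2 = 0
          · have : b = 2*m' := by omega
            rw [this, ff_even k μ sgn hdm']
            omega
          · have : b = 2*m'+1 := by omega
            rw [this, ff_odd k μ sgn hdm']
            omega
        rw [e1, e2] at h2
        exact h2
      rcases Nat.lt_or_ge m m' with hmm | hmm
      · have htlt := target_mono k μ sgn hdm hdm' hmm hfib hsgn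
        -- now all parity cases
        by_cases hea : a % 2 = 0 <;> by_cases heb : b % 2 = 0
        · have e1 : a = 2*m := by omega
          have e2 : b = 2*m' := by omega
          rw [e1, e2, ff_even k μ sgn hdm, ff_even k μ sgn hdm']
          omega
        · have e1 : a = 2*m := by omega
          have e2 : b = 2*m'+1 := by omega
          rw [e1, e2, ff_even k μ sgn hdm, ff_odd k μ sgn hdm']
          omega
        · have e1 : a = 2*m+1 := by omega
          have e2 : b = 2*m' := by omega
          rw [e1, e2, ff_odd k μ sgn hdm, ff_even k μ sgn hdm']
          omega
        · have e1 : a = 2*m+1 := by omega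
          have e2 : b = 2*m'+1 := by omega
          rw [e1, e2, ff_odd k μ sgn hdm, ff_odd k μ sgn hdm']
          omega
      · -- m' ≤ m : then a < b forces m = m', a even, b odd
        have hmeq : m = m' := by omega
        have hea : a = 2*m := by omega
        have heb : b = 2*m+1 := by omega
        rw [hea, heb, ff_even k μ sgn hdm, ff_odd k μ sgn hdm]
        omega
    · -- b outside: b ≥ 2k+2 (since b > a ≥ 2)
      have hb2 : ff k μ sgn b = b := ff_fix k μ sgn hsb
      have := (ff_bounds k μ sgn hsa).2
      rw [hb2]
      omega
  · -- a outside: a ≤ 1 or a ≥ 2k+2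
    have ha2 : ff k μ sgn a = a := ff_fix k μ sgn hsa
    by_cases hsb : 1 ≤ b/2 ∧ b/2 ≤ k
    · have := (ff_bounds k μ sgn hsb).1
      have hble : b ≤ 2*k+1 := by omega
      rw [ha2]
      omega
    · rw [ha2, ff_fix k μ sgn hsb]
      exact hab

include hμ ht in
lemma ford_diff {a b : ℕ} (hab : a < b) (hE : extMap μ a ≠ extMap μ b) :
    ff k μ sgn a < ff k μ sgn b := by
  by_cases hsa : 1 ≤ a/2 ∧ a/2 ≤ k
  · by_cases hsb : 1 ≤ b/2 ∧ b/2 ≤ k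
    · set m := a/2 with hm
      set m' := b/2 with hm'
      have hdm : InDom k m := ⟨hsa.1, hsa.2⟩
      have hdm' : InDom k m' := ⟨hsb.1, hsb.2⟩
      have hfib : μ (2*m) ≠ μ (2*m') := by
        have q1 := extMap_eq_half μ a
        have q2 := extMap_eq_half μ b
        intro hcon
        apply hE
        rw [q1, q2, ← hm, ← hm', hcon]
      have hmm : m < m' := by
        rcases Nat.lt_or_ge m m' with h | h
        · exact h
        · exfalso
          rcases Nat.eq_or_lt_of_le h with h2 | h2
          · exact hfib (by rw [h2])
          · omega
      have htlt : target k μ sgn m < target k μ sgn m' :=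
        fiber_sep k μ sgn hμ ht hdm hdm' (target_indom k μ sgn hdm) (target_indom k μ sgn hdm')
          hfib hmm (mu_target k μ sgn hdm) (mu_target k μ sgn hdm')
      by_cases hea : a % 2 = 0 <;> by_cases heb : b % 2 = 0
      · have e1 : a = 2*m := by omega
        have e2 : b = 2*m' := by omega
        rw [e1, e2, ff_even k μ sgn hdm, ff_even k μ sgn hdm']
        omega
      · have e1 : a = 2*m := by omega
        have e2 : b = 2*m'+1 := by omega
        rw [e1, e2, ff_even k μ sgn hdm, ff_odd k μ sgn hdm']
        omega
      · have e1 : a = 2*m+1 := by omega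
        have e2 : b = 2*m' := by omega
        rw [e1, e2, ff_odd k μ sgn hdm, ff_even k μ sgn hdm']
        omega
      · have e1 : a = 2*m+1 := by omega
        have e2 : b = 2*m'+1 := by omega
        rw [e1, e2, ff_odd k μ sgn hdm, ff_odd k μ sgn hdm']
        omega
    · have hb2 : ff k μ sgn b = b := ff_fix k μ sgn hsb
      have := (ff_bounds k μ sgn hsa).2
      rw [hb2]
      omega
  · have ha2 : ff k μ sgn a = a := ff_fix k μ sgn hsa
    by_cases hsb : 1 ≤ b/2 ∧ b/2 ≤ k
    · have := (ff_bounds k μ sgn hsb).1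
      have hble : b ≤ 2*k+1 := by omega
      rw [ha2]
      omega
    · rw [ha2, ff_fix k μ sgn hsb]
      exact hab

lemma gg_inj {x y : ℕ} (h : gg k μ sgn x = gg k μ sgn y) : x = y := by
  have := congrArg (ff k μ sgn) h
  rwa [ff_gg, ff_gg] at this

lemma ff_zero : ff k μ sgn 0 = 0 := by
  rw [ff_fix]
  omega

lemma muh_pos {x : ℕ} (hx : 1 ≤ x) : 1 ≤ gg k μ sgn x := by
  rcases Nat.eq_zero_or_pos (gg k μ sgn x) with h | h
  · exfalso
    have := congrArg (ff k μ sgn) h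
    rw [ff_gg, ff_zero] at this
    omega
  · exact h

include hμ ht in
lemma gg_parent_lt {j : ℕ} (hj : InDom k j) : gg k μ sgn (μ (2*j)) < 2*j := by
  obtain ⟨hx1, hx2⟩ := hμ.2 j hj.1 hj.2
  set x := μ (2*j) with hxdef
  have hjk := hj.2
  rcases Nat.lt_or_ge x 2 with h2 | h2
  · have : x = 1 := by omega
    rw [this, gg_one]
    omega
  · have hm : InDom k (x/2) := by
      constructor
      · omega
      · omega
    have hinv := invt_indom k μ sgn hm
    have hmate : 2 * invt k μ sgn (x/2) < 2*j := by
      apply mate_lt k μ sgn hμ ht hj hinv h2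
      rw [mu_invt k μ sgn hm, ← hxdef, extMap_eq_half]
    by_cases he : x % 2 = 0
    · have hx : x = 2*(x/2) := by omega
      rw [hx, gg_even k μ sgn hm]
      omega
    · have hx : x = 2*(x/2)+1 := by omega
      rw [hx, gg_odd k μ sgn hm]
      omega

include hμ ht in
lemma muh_collapsing : IsCollapsing k (muh k μ sgn) := by
  constructor
  · show gg k μ sgn (μ 2) = 1
    rw [hμ.1, gg_one]
  · intro j hj1 hj2
    constructor
    · exact muh_pos k μ sgn (hμ.2 j hj1 hj2).1
    · exact gg_parent_lt k μ sgn hμ ht ⟨hj1, hj2⟩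

lemma gp_muh (n : ℕ) :
    extMap (muh k μ sgn) (extMap (muh k μ sgn) n) = gg k μ sgn (extMap μ (extMap μ n)) := by
  rw [extMap_muh, extMap_muh, gg_extMap]

include hμ ht in
lemma muh_tamed : Tamed k (muh k μ sgn) (sh k μ sgn) := by
  refine ⟨?_, ?_, ?_, ?_⟩
  · intro l r hl hr hlt
    rw [tier_muh, tier_muh] at hlt
    exact ht.1 l r hl hr hlt
  · intro l r hl hr htier hgp hsgn hlt
    rw [tier_muh, tier_muh] at htier
    rw [gp_muh, gp_muh] at hgp
    have hgp' := gg_inj k μ sgn hgp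
    show 2*l < 2*r
    apply ht.2.1 l r hl hr htier hgp'
    · have e1 := gg_extSgn k μ sgn (μ (2*l))
      have e2 := gg_extSgn k μ sgn (μ (2*r))
      show extSgn sgn (μ (2*l)) = extSgn sgn (μ (2*r))
      rw [← e1, ← e2]
      exact hsgn
    · -- order: muh(2l) < muh(2r) gives μ(2l) < μ(2r) via ford_same
      have hford := ford_same k μ sgn hμ ht (a := muh k μ sgn (2*l)) (b := muh k μ sgn (2*r))
        hlt
        (by
          show extMap μ (gg k μ sgn (μ (2*l))) = extMap μ (gg k μ sgn (μ (2*r)))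
          rw [gg_extMap, gg_extMap]
          rw [extMap_even, extMap_even] at hgp'
          exact hgp')
        hsgn
      show μ (2*l) < μ (2*r)
      have e1 : ff k μ sgn (muh k μ sgn (2*l)) = μ (2*l) := ff_gg k μ sgn _
      have e2 : ff k μ sgn (muh k μ sgn (2*r)) = μ (2*r) := ff_gg k μ sgn _
      rw [← e1, ← e2]
      exact hford
  · intro l r hl hr htier hgp hsl hsr
    rw [tier_muh, tier_muh] at htier
    rw [gp_muh, gp_muh] at hgp
    have hgp' := gg_inj k μ sgn hgp
    apply ht.2.2.1 l r hl hr htier hgp'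
    · rw [← gg_extSgn k μ sgn (μ (2*l))]
      exact hsl
    · rw [← gg_extSgn k μ sgn (μ (2*r))]
      exact hsr
  · intro l r hl hr htier hgp hlt
    rw [tier_muh, tier_muh] at htier
    rw [gp_muh, gp_muh] at hgp
    have hgp' : extMap μ (extMap μ (2*l)) ≠ extMap μ (extMap μ (2*r)) := by
      intro hcon
      exact hgp (by rw [hcon])
    apply ht.2.2.2 l r hl hr htier hgp'
    have hford := ford_diff k μ sgn hμ ht (a := muh k μ sgn (2*l)) (b := muh k μ sgn (2*r))
      hlt
      (by
        show extMap μ (gg k μ sgn (μ (2*l))) ≠ extMap μ (gg k μ sgn (μ (2*r)))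
        rw [gg_extMap, gg_extMap]
        rw [extMap_even, extMap_even] at hgp'
        exact hgp')
    show μ (2*l) < μ (2*r)
    have e1 : ff k μ sgn (muh k μ sgn (2*l)) = μ (2*l) := ff_gg k μ sgn _
    have e2 : ff k μ sgn (muh k μ sgn (2*r)) = μ (2*r) := ff_gg k μ sgn _
    rw [← e1, ← e2]
    exact hford

include hμ ht in
lemma muh_reference : IsReference k (muh k μ sgn) (sh k μ sgn) := by
  constructor
  · exact muh_tamed k μ sgn hμ ht
  · intro l r hl hr hlr hfib hsr
    have hfib' : μ (2*l) = μ (2*r) := gg_inj k μ sgn hfib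
    have e1 : sh k μ sgn (2*l) = sgn (2 * target k μ sgn l) := by
      show sgn (ff k μ sgn (2*l)) = _
      rw [ff_even k μ sgn hl]
    have e2 : sh k μ sgn (2*r) = sgn (2 * target k μ sgn r) := by
      show sgn (ff k μ sgn (2*r)) = _
      rw [ff_even k μ sgn hr]
    rw [e1]
    rw [e2] at hsr
    exact target_sign_sorted k μ sgn hl hr hlr hfib' hsr

lemma rho_extPerm : ExtPerm k (rho k μ sgn) := by
  constructor
  · intro n hn
    show ff k μ sgn n = n
    apply ff_fix
    intro hcon
    have hd : InDom k (n/2) := ⟨hcon.1, hcon.2⟩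
    obtain ⟨h1, h2⟩ := hn (n/2) hd
    by_cases he : n % 2 = 0
    · exact h1 (by omega)
    · exact h2 (by omega)
  · intro l hl
    constructor
    · exact ⟨target k μ sgn l, target_indom k μ sgn hl, by
        show ff k μ sgn (2*l) = _
        rw [ff_even k μ sgn hl]⟩
    · show ff k μ sgn (2*l+1) = ff k μ sgn (2*l) + 1
      rw [ff_even k μ sgn hl, ff_odd k μ sgn hl]

lemma rho_allowable : Allowable k (muh k μ sgn) (sh k μ sgn) (rho k μ sgn) := by
  refine ⟨rho_extPerm k μ sgn, ?_, ?_⟩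
  · intro l hl
    show muh k μ sgn (ff k μ sgn (2*l)) = muh k μ sgn (2*l)
    rw [ff_even k μ sgn hl]
    show gg k μ sgn (μ (2 * target k μ sgn l)) = gg k μ sgn (μ (2*l))
    rw [mu_target k μ sgn hl]
  · intro l r hl hr hlr hfib hsgn
    have hfib' : μ (2*l) = μ (2*r) := gg_inj k μ sgn hfib
    have e1 : sh k μ sgn (2*l) = sgn (2 * target k μ sgn l) := by
      show sgn (ff k μ sgn (2*l)) = _
      rw [ff_even k μ sgn hl]
    have e2 : sh k μ sgn (2*r) = sgn (2 * target k μ sgn r) := by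
      show sgn (ff k μ sgn (2*r)) = _
      rw [ff_even k μ sgn hr]
    rw [e1, e2] at hsgn
    have := target_mono k μ sgn hl hr hlr hfib' hsgn
    show ff k μ sgn (2*l) < ff k μ sgn (2*r)
    rw [ff_even k μ sgn hl, ff_even k μ sgn hr]
    omega

lemma rho_wildmove : WildMoveEq k (rho k μ sgn) (muh k μ sgn) (sh k μ sgn) μ sgn := by
  constructor
  · intro l hl
    show μ (2*l) = ff k μ sgn (gg k μ sgn (μ (2*l)))
    rw [ff_gg]
  · intro l hl
    rfl

/-- mapping a sorted list by a strictly monotone map gives the sorted image list -/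
lemma sort_map_eq {s t : Finset ℕ} {f : ℕ → ℕ}
    (hmono : ∀ x ∈ s, ∀ y ∈ s, x < y → f x < f y)
    (himg : s.image f = t) :
    (s.sort (· ≤ ·)).map f = t.sort (· ≤ ·) := by
  haveI : IsAntisymm ℕ (· < ·) := ⟨fun a b h1 h2 => absurd h2 (Nat.lt_asymm h1)⟩
  have hinj : ∀ x ∈ s.sort (· ≤ ·), ∀ y ∈ s.sort (· ≤ ·), f x = f y → x = y := by
    intro x hx y hy hxy
    rw [Finset.mem_sort] at hx hy
    rcases lt_trichotomy x y with h | h | h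
    · have := hmono x hx y hy h; omega
    · exact h
    · have := hmono y hy x hx h; omega
  have hnd : ((s.sort (· ≤ ·)).map f).Nodup :=
    List.Nodup.map_on hinj (s.sort_nodup _)
  have hperm : List.Perm ((s.sort (· ≤ ·)).map f) (t.sort (· ≤ ·)) := by
    apply List.perm_of_nodup_nodup_toFinset_eq hnd (t.sort_nodup _)
    ext a
    simp only [List.mem_toFinset, List.mem_map, Finset.mem_sort, ← himg, Finset.mem_image]
  have hsorted : ((s.sort (· ≤ ·)).map f).Pairwise (· < ·) := by
    rw [List.pairwise_map]
    apply List.Pairwise.imp_of_mem _ ((Finset.sortedLT_sort s).pairwise)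
    intro a b ha hb hab
    rw [Finset.mem_sort] at ha hb
    exact hmono a ha b hb hab
  exact List.Perm.eq_of_pairwise' hsorted (Finset.sortedLT_sort t).pairwise hperm

/-- two strictly monotone maps with the same finite domain and image agree -/
lemma strictMono_unique {s t : Finset ℕ} {f g : ℕ → ℕ}
    (hf : ∀ x ∈ s, ∀ y ∈ s, x < y → f x < f y)
    (hg : ∀ x ∈ s, ∀ y ∈ s, x < y → g x < g y)
    (hfi : s.image f = t) (hgi : s.image g = t) :
    ∀ x ∈ s, f x = g x := by
  have h1 := sort_map_eq hf hfi
  have h2 := sort_map_eq hg hgi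
  intro x hx
  have hxm : x ∈ s.sort (· ≤ ·) := (Finset.mem_sort _).2 hx
  have hil : (s.sort (· ≤ ·)).idxOf x < (s.sort (· ≤ ·)).length :=
    List.idxOf_lt_length_iff.2 hxm
  have hfl : (s.sort (· ≤ ·)).idxOf x < ((s.sort (· ≤ ·)).map f).length := by
    rw [List.length_map]; exact hil
  have hgl : (s.sort (· ≤ ·)).idxOf x < ((s.sort (· ≤ ·)).map g).length := by
    rw [List.length_map]; exact hil
  have e1 : ((s.sort (· ≤ ·)).map f)[(s.sort (· ≤ ·)).idxOf x]'hfl = f x := by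
    rw [List.getElem_map, List.getElem_idxOf hil]
  have e2 : ((s.sort (· ≤ ·)).map g)[(s.sort (· ≤ ·)).idxOf x]'hgl = g x := by
    rw [List.getElem_map, List.getElem_idxOf hil]
  rw [← e1, ← e2]
  congr 1
  rw [h1, h2]

/-- downward-closed subsets of equal cardinality coincide -/
lemma downward_closed_eq {G S T : Finset ℕ} (hS : S ⊆ G) (hT : T ⊆ G)
    (hSd : ∀ x ∈ G, ∀ y ∈ S, x ≤ y → x ∈ S) (hTd : ∀ x ∈ G, ∀ y ∈ T, x ≤ y → x ∈ T)
    (hcard : S.card = T.card) : S = T := by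
  have hsub : S ⊆ T := by
    intro x hx
    by_contra hxT
    have hTS : T ⊆ S := by
      intro y hy
      have hyx : y < x := by
        rcases Nat.lt_or_ge y x with h | h
        · exact h
        · exfalso
          exact hxT (hTd x (hS hx) y hy (by omega))
      exact hSd y (hT hy) x hx (by omega)
    have : T = S := Finset.eq_of_subset_of_card_le hTS (le_of_eq hcard)
    rw [this] at hxT
    exact hxT hx
  exact Finset.eq_of_subset_of_card_le hsub (le_of_eq hcard.symm)

section keyuniq
variable (τ : ℕ → ℕ)

lemma sigma_injOn_fib
    (h2 : ∀ a b, InDom k a → InDom k b → τ a = τ b → a = b) {l : ℕ} {s : Finset ℕ}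
    (hs : s ⊆ fib k μ l) : Set.InjOn τ ↑s := by
  intro a ha b hb hab
  rw [Finset.mem_coe] at ha hb
  have hA := (mem_fib_iff k μ).1 (hs ha)
  have hB := (mem_fib_iff k μ).1 (hs hb)
  exact h2 a b ⟨hA.1.1, hA.1.2⟩ ⟨hB.1.1, hB.1.2⟩ hab

lemma sigma_image_fib
    (h1 : ∀ m, InDom k m → InDom k (τ m) ∧ μ (2 * τ m) = μ (2*m))
    (h2 : ∀ a b, InDom k a → InDom k b → τ a = τ b → a = b) (l : ℕ) :
    (fib k μ l).image τ = fib k μ l := by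
  apply Finset.eq_of_subset_of_card_le
  · intro y hy
    rw [Finset.mem_image] at hy
    obtain ⟨x, hx, rfl⟩ := hy
    have hX := (mem_fib_iff k μ).1 hx
    have := h1 x ⟨hX.1.1, hX.1.2⟩
    rw [mem_fib_iff]
    exact ⟨⟨this.1.1, this.1.2⟩, by rw [this.2, hX.2]⟩
  · rw [Finset.card_image_of_injOn (sigma_injOn_fib k μ τ h2 (Finset.Subset.refl _))]

lemma sigma_signed_image
    (h1 : ∀ m, InDom k m → InDom k (τ m) ∧ μ (2 * τ m) = μ (2*m))
    (h2 : ∀ a b, InDom k a → InDom k b → τ a = τ b → a = b) (l : ℕ) (v : Bool) :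
    ((fib k μ l).filter (fun m => sgn (2 * τ m) = v)).image τ
      = (fib k μ l).filter (fun y => sgn (2*y) = v) := by
  ext y
  rw [Finset.mem_image, Finset.mem_filter]
  constructor
  · rintro ⟨x, hx, rfl⟩
    rw [Finset.mem_filter] at hx
    have hX := (mem_fib_iff k μ).1 hx.1
    have := h1 x ⟨hX.1.1, hX.1.2⟩
    refine ⟨?_, hx.2⟩
    rw [mem_fib_iff]
    exact ⟨⟨this.1.1, this.1.2⟩, by rw [this.2, hX.2]⟩
  · rintro ⟨hy, hsy⟩
    have : y ∈ (fib k μ l).image τ := by rw [sigma_image_fib k μ τ h1 h2 l]; exact hy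
    rw [Finset.mem_image] at this
    obtain ⟨x, hx, rfl⟩ := this
    exact ⟨x, Finset.mem_filter.2 ⟨hx, hsy⟩, rfl⟩

lemma sigma_signed_card
    (h1 : ∀ m, InDom k m → InDom k (τ m) ∧ μ (2 * τ m) = μ (2*m))
    (h2 : ∀ a b, InDom k a → InDom k b → τ a = τ b → a = b) (l : ℕ) (v : Bool) :
    ((fib k μ l).filter (fun m => sgn (2 * τ m) = v)).card
      = ((fib k μ l).filter (fun y => sgn (2*y) = v)).card := by
  rw [← sigma_signed_image k μ sgn τ h1 h2 l v]
  rw [Finset.card_image_of_injOn (sigma_injOn_fib k μ τ h2 (Finset.filter_subset _ _))]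

lemma key_uniq
    (h1 : ∀ m, InDom k m → InDom k (τ m) ∧ μ (2 * τ m) = μ (2*m))
    (h2 : ∀ a b, InDom k a → InDom k b → τ a = τ b → a = b)
    (h3 : ∀ l r, InDom k l → InDom k r → l < r → μ (2*l) = μ (2*r) →
      sgn (2 * τ r) = true → sgn (2 * τ l) = true)
    (h4 : ∀ l r, InDom k l → InDom k r → l < r → μ (2*l) = μ (2*r) →
      sgn (2 * τ l) = sgn (2 * τ r) → τ l < τ r) :
    ∀ l, InDom k l → τ l = target k μ sgn l := by
  -- target's own versions
  have t1 : ∀ m, InDom k m → InDom k (target k μ sgn m) ∧ μ (2 * target k μ sgn m) = μ (2*m) :=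
    fun m hm => ⟨target_indom k μ sgn hm, mu_target k μ sgn hm⟩
  have t2 : ∀ a b, InDom k a → InDom k b → target k μ sgn a = target k μ sgn b → a = b :=
    fun a b ha hb h => target_injOn k μ sgn ⟨ha.1, ha.2⟩ ⟨hb.1, hb.2⟩ h
  have t3 := fun l r hl hr hlr hf hs => target_sign_sorted k μ sgn (l := l) (r := r) hl hr hlr hf hs
  have t4 := fun l r hl hr hlr hf hs => target_mono k μ sgn (l := l) (r := r) hl hr hlr hf hs
  intro l hl
  set G := fib k μ l with hG
  have hfibmem : ∀ m ∈ G, InDom k m ∧ μ (2*m) = μ (2*l) := by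
    intro m hm
    have := (mem_fib_iff k μ).1 hm
    exact ⟨⟨this.1.1, this.1.2⟩, this.2⟩
  have hfibeq : ∀ a ∈ G, ∀ b ∈ G, μ (2*a) = μ (2*b) := by
    intro a ha b hb
    rw [(hfibmem a ha).2, (hfibmem b hb).2]
  -- the + parts agree
  have hsplus : G.filter (fun m => sgn (2 * τ m) = true)
      = G.filter (fun m => sgn (2 * target k μ sgn m) = true) := by
    apply downward_closed_eq (G := G) (Finset.filter_subset _ _) (Finset.filter_subset _ _)
    · intro x hx y hy hxy
      rw [Finset.mem_filter] at hy ⊢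
      refine ⟨hx, ?_⟩
      rcases Nat.eq_or_lt_of_le hxy with h | h
      · rw [h]; exact hy.2
      · exact h3 x y (hfibmem x hx).1 (hfibmem y hy.1).1 h (hfibeq x hx y hy.1) hy.2
    · intro x hx y hy hxy
      rw [Finset.mem_filter] at hy ⊢
      refine ⟨hx, ?_⟩
      rcases Nat.eq_or_lt_of_le hxy with h | h
      · rw [h]; exact hy.2
      · exact t3 x y (hfibmem x hx).1 (hfibmem y hy.1).1 h (hfibeq x hx y hy.1) hy.2
    · rw [sigma_signed_card k μ sgn τ h1 h2 l true, sigma_signed_card k μ sgn _ t1 t2 l true]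
  -- the − parts then also agree
  have hsminus : G.filter (fun m => sgn (2 * τ m) = false)
      = G.filter (fun m => sgn (2 * target k μ sgn m) = false) := by
    have e1 : G.filter (fun m => sgn (2 * τ m) = false)
        = G \ G.filter (fun m => sgn (2 * τ m) = true) := by
      ext x
      rw [Finset.mem_filter, Finset.mem_sdiff, Finset.mem_filter]
      constructor
      · rintro ⟨hx, hs⟩
        exact ⟨hx, by rw [hs]; simp⟩
      · rintro ⟨hx, hs⟩
        refine ⟨hx, ?_⟩
        rcases Bool.eq_false_or_eq_true (sgn (2 * τ x)) with h | h
        · exfalso; exact hs ⟨hx, h⟩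
        · exact h
    have e2 : G.filter (fun m => sgn (2 * target k μ sgn m) = false)
        = G \ G.filter (fun m => sgn (2 * target k μ sgn m) = true) := by
      ext x
      rw [Finset.mem_filter, Finset.mem_sdiff, Finset.mem_filter]
      constructor
      · rintro ⟨hx, hs⟩
        exact ⟨hx, by rw [hs]; simp⟩
      · rintro ⟨hx, hs⟩
        refine ⟨hx, ?_⟩
        rcases Bool.eq_false_or_eq_true (sgn (2 * target k μ sgn x)) with h | h
        · exfalso; exact hs ⟨hx, h⟩
        · exact h
    rw [e1, e2, hsplus]
  -- agreement on each signed part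
  have hagree : ∀ v : Bool, ∀ x ∈ G.filter (fun m => sgn (2 * τ m) = v), τ x = target k μ sgn x := by
    intro v
    have hmono_τ : ∀ x ∈ G.filter (fun m => sgn (2 * τ m) = v),
        ∀ y ∈ G.filter (fun m => sgn (2 * τ m) = v), x < y → τ x < τ y := by
      intro x hx y hy hxy
      rw [Finset.mem_filter] at hx hy
      exact h4 x y (hfibmem x hx.1).1 (hfibmem y hy.1).1 hxy (hfibeq x hx.1 y hy.1)
        (by rw [hx.2, hy.2])
    have hmono_t : ∀ x ∈ G.filter (fun m => sgn (2 * τ m) = v),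
        ∀ y ∈ G.filter (fun m => sgn (2 * τ m) = v), x < y → target k μ sgn x < target k μ sgn y := by
      have hrw : G.filter (fun m => sgn (2 * τ m) = v)
          = G.filter (fun m => sgn (2 * target k μ sgn m) = v) := by
        rcases v with _ | _
        · exact hsminus
        · exact hsplus
      rw [hrw]
      intro x hx y hy hxy
      rw [Finset.mem_filter] at hx hy
      exact t4 x y (hfibmem x hx.1).1 (hfibmem y hy.1).1 hxy (hfibeq x hx.1 y hy.1)
        (by rw [hx.2, hy.2])
    apply strictMono_unique hmono_τ hmono_t
    · exact sigma_signed_image k μ sgn τ h1 h2 l v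
    · have hrw : G.filter (fun m => sgn (2 * τ m) = v)
          = G.filter (fun m => sgn (2 * target k μ sgn m) = v) := by
        rcases v with _ | _
        · exact hsminus
        · exact hsplus
      rw [hrw]
      exact sigma_signed_image k μ sgn _ t1 t2 l v
  have hlG : l ∈ G := by
    rw [hG, mem_fib_iff]
    exact ⟨⟨hl.1, hl.2⟩, rfl⟩
  rcases Bool.eq_false_or_eq_true (sgn (2 * τ l)) with h | h
  · exact hagree true l (Finset.mem_filter.2 ⟨hlG, h⟩)
  · exact hagree false l (Finset.mem_filter.2 ⟨hlG, h⟩)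

end keyuniq

/-- any extended permutation that preserves μ-fibers, is sign-sorted and
sign-monotone coincides with `rho` -/
lemma perm_eq_rho (ρ' : Equiv.Perm ℕ) (hext : ExtPerm k ρ')
    (hfib : ∀ l, InDom k l → μ (ρ' (2*l)) = μ (2*l))
    (hsort : ∀ l r, InDom k l → InDom k r → l < r → μ (2*l) = μ (2*r) →
      sgn (ρ' (2*r)) = true → sgn (ρ' (2*l)) = true)
    (hmono : ∀ l r, InDom k l → InDom k r → l < r → μ (2*l) = μ (2*r) →
      sgn (ρ' (2*l)) = sgn (ρ' (2*r)) → ρ' (2*l) < ρ' (2*r)) :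
    ∀ n, ρ' n = rho k μ sgn n := by
  set τ : ℕ → ℕ := fun m => (ρ' (2*m)) / 2 with hτ
  have hhalf : ∀ m, InDom k m → 2 * τ m = ρ' (2*m) := by
    intro m hm
    obtain ⟨⟨m', hm', he⟩, _⟩ := hext.2 m hm
    rw [hτ]
    simp only
    rw [he]
    omega
  have hτdom : ∀ m, InDom k m → InDom k (τ m) := by
    intro m hm
    obtain ⟨⟨m', hm', he⟩, _⟩ := hext.2 m hm
    have : τ m = m' := by rw [hτ]; simp only; rw [he]; omega
    rw [this]; exact hm'
  have h1 : ∀ m, InDom k m → InDom k (τ m) ∧ μ (2 * τ m) = μ (2*m) := by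
    intro m hm
    refine ⟨hτdom m hm, ?_⟩
    rw [hhalf m hm]
    exact hfib m hm
  have h2 : ∀ a b, InDom k a → InDom k b → τ a = τ b → a = b := by
    intro a b ha hb he
    have : ρ' (2*a) = ρ' (2*b) := by
      rw [← hhalf a ha, ← hhalf b hb, he]
    have := ρ'.injective this
    omega
  have h3 : ∀ l r, InDom k l → InDom k r → l < r → μ (2*l) = μ (2*r) →
      sgn (2 * τ r) = true → sgn (2 * τ l) = true := by
    intro l r hl hr hlr hf hs
    rw [hhalf l hl]
    rw [hhalf r hr] at hs
    exact hsort l r hl hr hlr hf hs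
  have h4 : ∀ l r, InDom k l → InDom k r → l < r → μ (2*l) = μ (2*r) →
      sgn (2 * τ l) = sgn (2 * τ r) → τ l < τ r := by
    intro l r hl hr hlr hf hs
    rw [hhalf l hl, hhalf r hr] at hs
    have := hmono l r hl hr hlr hf hs
    rw [← hhalf l hl, ← hhalf r hr] at this
    omega
  have hkey := key_uniq k μ sgn τ h1 h2 h3 h4
  have heven : ∀ m, InDom k m → ρ' (2*m) = rho k μ sgn (2*m) := by
    intro m hm
    have e1 : rho k μ sgn (2*m) = 2 * target k μ sgn m := by
      show ff k μ sgn (2*m) = _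
      rw [ff_even k μ sgn hm]
    rw [e1, ← hkey m hm]
    exact (hhalf m hm).symm
  intro n
  by_cases hn : 1 ≤ n/2 ∧ n/2 ≤ k
  · have hdm : InDom k (n/2) := ⟨hn.1, hn.2⟩
    by_cases he : n % 2 = 0
    · have : n = 2*(n/2) := by omega
      rw [this]
      exact heven (n/2) hdm
    · have hodd : n = 2*(n/2)+1 := by omega
      have e1 := (hext.2 (n/2) hdm).2
      have e2 : rho k μ sgn (2*(n/2)+1) = rho k μ sgn (2*(n/2)) + 1 := by
        show ff k μ sgn _ = ff k μ sgn _ + 1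
        rw [ff_even k μ sgn hdm, ff_odd k μ sgn hdm]
      rw [hodd, e1, e2, heven (n/2) hdm]
  · have hfix : ρ' n = n := by
      apply hext.1
      intro l hli
      constructor
      · intro hcon
        apply hn
        rw [hcon]
        have := hli.1
        have := hli.2
        omega
      · intro hcon
        apply hn
        rw [hcon]
        have := hli.1
        have := hli.2
        omega
    rw [hfix]
    exact (ff_fix k μ sgn hn).symm

include hμ ht in
lemma wild_perm_eq (μh' : ℕ → ℕ) (sh' : ℕ → Bool) (href' : IsReference k μh' sh')
    (ρ₂ : Equiv.Perm ℕ) (hallow : Allowable k μh' sh' ρ₂)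
    (hwild : WildMoveEq k ρ₂ μh' sh' μ sgn) :
    ∀ n, ρ₂ n = rho k μ sgn n := by
  have hext := hallow.1
  have hfib : ∀ l, InDom k l → μ (ρ₂ (2*l)) = μ (2*l) := by
    intro l hl
    obtain ⟨⟨m', hm', he⟩, _⟩ := hext.2 l hl
    have e1 : μh' (2*m') = μh' (2*l) := by
      rw [← he]
      exact hallow.2.1 l hl
    calc μ (ρ₂ (2*l)) = μ (2*m') := by rw [he]
    _ = ρ₂ (μh' (2*m')) := hwild.1 m' hm'
    _ = ρ₂ (μh' (2*l)) := by rw [e1]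
    _ = μ (2*l) := (hwild.1 l hl).symm
  have hfib' : ∀ l r, InDom k l → InDom k r → μ (2*l) = μ (2*r) → μh' (2*l) = μh' (2*r) := by
    intro l r hl hr hf
    apply ρ₂.injective
    rw [← hwild.1 l hl, ← hwild.1 r hr, hf]
  apply perm_eq_rho k μ sgn ρ₂ hext hfib
  · intro l r hl hr hlr hf hs
    rw [hwild.2 r hr] at hs
    rw [hwild.2 l hl]
    exact href'.2 l r hl hr hlr (hfib' l r hl hr hf) hs
  · intro l r hl hr hlr hf hs
    rw [hwild.2 l hl, hwild.2 r hr] at hs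
    exact hallow.2.2 l r hl hr hlr (hfib' l r hl hr hf) hs

end S11

theorem stmt_11 (k : ℕ) (μ : ℕ → ℕ) (sgn : ℕ → Bool)
    (hμ : IsCollapsing k μ) (ht : Tamed k μ sgn) :
    ∃ μh : ℕ → ℕ, ∃ sh : ℕ → Bool,
      IsCollapsing k μh ∧ IsReference k μh sh ∧ WildRel k μh sh μ sgn ∧
      (∀ μh' : ℕ → ℕ, ∀ sh' : ℕ → Bool,
        IsCollapsing k μh' → IsReference k μh' sh' → WildRel k μh' sh' μ sgn →
        ∀ l, InDom k l → μh' (2*l) = μh (2*l) ∧ sh' (2*l) = sh (2*l)) ∧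
      (∃ ρ, Allowable k μh sh ρ ∧ WildMoveEq k ρ μh sh μ sgn ∧
        ∀ ρ', Allowable k μh sh ρ' → WildMoveEq k ρ' μh sh μ sgn → ρ' = ρ) := by
  refine ⟨S11.muh k μ sgn, S11.sh k μ sgn,
    S11.muh_collapsing k μ sgn hμ ht,
    S11.muh_reference k μ sgn hμ ht,
    ⟨S11.rho k μ sgn, S11.rho_allowable k μ sgn, S11.rho_wildmove k μ sgn⟩,
    ?_, ?_⟩
  · -- uniqueness of the reference pair
    intro μh' sh' _hcol' href' hwrel' l hl
    obtain ⟨ρ₂, hallow, hwild⟩ := hwrel'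
    have hpt := S11.wild_perm_eq k μ sgn hμ ht μh' sh' href' ρ₂ hallow hwild
    constructor
    · have a1 : μ (2*l) = ρ₂ (μh' (2*l)) := hwild.1 l hl
      rw [hpt] at a1
      have b1 : S11.rho k μ sgn (S11.muh k μ sgn (2*l)) = μ (2*l) := S11.ff_gg k μ sgn _
      apply (S11.rho k μ sgn).injective
      rw [b1, ← a1]
    · have a2 : sgn (ρ₂ (2*l)) = sh' (2*l) := hwild.2 l hl
      rw [hpt] at a2
      exact a2.symm
  · refine ⟨S11.rho k μ sgn, S11.rho_allowable k μ sgn, S11.rho_wildmove k μ sgn, ?_⟩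
    intro ρ'' hallow hwild
    have hpt := S11.wild_perm_eq k μ sgn hμ ht (S11.muh k μ sgn) (S11.sh k μ sgn)
      (S11.muh_reference k μ sgn hμ ht) ρ'' hallow hwild
    exact Equiv.ext hpt
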